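/- Let a be a bounded linear operator on E, 1≤p<∞. If I − D_a S maps l_p(ℤ;E) onto l_p(ℤ;E), then I − a has dense range in E. -/
import Mathlib


open MeasureTheory Filter Topology
open scoped ENNReal

noncomputable section

instance : Fact (0 < 2 * Real.pi) := ⟨by positivity⟩

/-- `T` is a strongly continuous (C₀-) one-parameter semigroup of bounded
linear operators. -/
def IsC0Semigroup {X : Type*} [NormedAddCommGroup X] [NormedSpace ℂ X]
    (T : ℝ → X →L[ℂ] X) : Prop :=
  T 0 = 1 ∧ (∀ s t : ℝ, 0 ≤ s → 0 ≤ t → T (s + t) = (T s).comp (T t)) ∧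
    ∀ x : X, ContinuousOn (fun t => T t x) (Set.Ici (0 : ℝ))

/-- The (in general unbounded, densely defined) operator `A`, given as a
partially defined linear map, is the infinitesimal generator of the semigroup `T`:
its domain consists exactly of the vectors `x` for which the right derivative of
`t ↦ T t x` at `0` exists, and `A x` is this derivative. -/
def IsGenerator {X : Type*} [NormedAddCommGroup X] [NormedSpace ℂ X]
    (T : ℝ → X →L[ℂ] X) (A : X →ₗ.[ℂ] X) : Prop :=
  ∀ x y : X,
    (∃ hx : x ∈ A.domain, A ⟨x, hx⟩ = y) ↔
      Tendsto (fun t : ℝ => (t : ℂ)⁻¹ • (T t x - x)) (𝓝[>] (0 : ℝ)) (𝓝 y)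

/-- `R` is the (bounded, everywhere defined) resolvent operator `(A - z)⁻¹` of the
partially defined linear operator `A` at the point `z`. -/
def IsPResolvent {X : Type*} [NormedAddCommGroup X] [NormedSpace ℂ X]
    (A : X →ₗ.[ℂ] X) (z : ℂ) (R : X →L[ℂ] X) : Prop :=
  ∃ hR : ∀ x : X, R x ∈ A.domain,
    (∀ x : X, A ⟨R x, hR x⟩ - z • R x = x) ∧
      ∀ x : A.domain, R (A x - z • (x : X)) = x

/-- The resolvent set of a partially defined linear operator. -/
def pResolventSet {X : Type*} [NormedAddCommGroup X] [NormedSpace ℂ X]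
    (A : X →ₗ.[ℂ] X) : Set ℂ :=
  {z | ∃ R : X →L[ℂ] X, IsPResolvent A z R}

/-- The spectrum of a partially defined linear operator. -/
def pSpectrum {X : Type*} [NormedAddCommGroup X] [NormedSpace ℂ X]
    (A : X →ₗ.[ℂ] X) : Set ℂ :=
  (pResolventSet A)ᶜ

/-- The approximate point spectrum of a partially defined linear operator. -/
def pApproxSpectrum {X : Type*} [NormedAddCommGroup X] [NormedSpace ℂ X]
    (A : X →ₗ.[ℂ] X) : Set ℂ :=
  {z | ∀ ε > (0 : ℝ), ∃ x : A.domain, ‖(x : X)‖ = 1 ∧ ‖A x - z • (x : X)‖ < ε}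

/-- The approximate point spectrum of a bounded linear operator. -/
def approxSpectrum {X : Type*} [NormedAddCommGroup X] [NormedSpace ℂ X]
    (T : X →L[ℂ] X) : Set ℂ :=
  {z | ∀ ε > (0 : ℝ), ∃ x : X, ‖x‖ = 1 ∧ ‖T x - z • x‖ < ε}

/-- `U` is an evolutionary family (propagator): strong continuity, the algebraic
identities `U x s = U x r ∘ U r s`, `U x x = I`, and an exponential bound. -/
def IsEvolutionFamily {X : Type*} [NormedAddCommGroup X] [NormedSpace ℂ X]
    (U : ℝ → ℝ → X →L[ℂ] X) : Prop :=
  (∀ v : X, ContinuousOn (fun q : ℝ × ℝ => U q.1 q.2 v) {q : ℝ × ℝ | q.2 ≤ q.1}) ∧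
  (∀ x r s : ℝ, s ≤ r → r ≤ x → U x s = (U x r).comp (U r s)) ∧
  (∀ x : ℝ, U x x = 1) ∧
  ∃ C β : ℝ, 0 < C ∧ 0 < β ∧ ∀ x s : ℝ, s ≤ x → ‖U x s‖ ≤ C * Real.exp (β * (x - s))

/-- Let `a` be a bounded operator on `E` and `1 ≤ p < ∞`. If
`I - D_a S` maps `l_p(ℤ;E)` onto itself (where `S` is the shift `(v_n) ↦ (v_{n-1})`
and `D_a` the diagonal operator `(v_n) ↦ (a v_n)`), then `I - a` has dense range
in `E`. -/
theorem statement6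
    {E : Type*} [NormedAddCommGroup E] [NormedSpace ℂ E] [CompleteSpace E]
    (a : E →L[ℂ] E) (p : ℝ≥0∞) [Fact (1 ≤ p)] (hp : p ≠ ∞)
    (W : lp (fun _ : ℤ => E) p →L[ℂ] lp (fun _ : ℤ => E) p)
    (hW : ∀ (v : lp (fun _ : ℤ => E) p) (n : ℤ), (W v) n = a (v (n - 1)))
    (hsurj : Function.Surjective ⇑((1 : lp (fun _ : ℤ => E) p →L[ℂ]
      lp (fun _ : ℤ => E) p) - W)) :
    DenseRange ⇑((1 : E →L[ℂ] E) - a) := by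
  have hptop : 0 < p.toReal := by
    have h1 : (1 : ℝ≥0∞) ≤ p := Fact.out
    exact ENNReal.toReal_pos (by positivity) hp
  rw [Metric.denseRange_iff]
  intro y ε hε
  obtain ⟨u, hu⟩ := hsurj (lp.single p (0 : ℤ) y)
  -- pointwise equation
  have key : ∀ n : ℤ, u n - a (u (n - 1)) = (if n = 0 then y else 0) := by
    intro n
    have h1 : ((1 - W) u) n = (lp.single p (0 : ℤ) y : lp (fun _ : ℤ => E) p) n := by
      rw [hu]
    rw [ContinuousLinearMap.sub_apply, ContinuousLinearMap.one_apply] at h1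
    have h2 : u n - (W u) n = (lp.single p (0 : ℤ) y : lp (fun _ : ℤ => E) p) n := by
      rw [← h1, lp.coeFn_sub, Pi.sub_apply]
    rw [hW u n] at h2
    rcases eq_or_ne n 0 with hn | hn
    · subst hn; simpa [lp.single_apply_self] using h2
    · rw [if_neg hn]; rw [lp.single_apply_ne (E := fun _ : ℤ => E) p 0 y hn] at h2; exact h2
  -- tails of u are small
  set δ : ℝ := ε / (2 * (‖a‖ + 1)) with hδdef
  have hδ : 0 < δ := by
    apply div_pos hε; positivity
  have hsum : Summable (fun n : ℤ => ‖u n‖ ^ p.toReal) := (lp.memℓp u).summable hptop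
  have hsmall : ∀ᶠ n in Filter.cofinite, ‖u n‖ < δ := by
    have h0 := hsum.tendsto_cofinite_zero
    have h1 : ∀ᶠ n in Filter.cofinite, ‖u n‖ ^ p.toReal < δ ^ p.toReal :=
      h0.eventually_lt_const (Real.rpow_pos_of_pos hδ _)
    filter_upwards [h1] with n hn
    by_contra hc
    push_neg at hc
    exact absurd (Real.rpow_le_rpow hδ.le hc hptop.le) (not_le.mpr hn)
  rw [Int.cofinite_eq, Filter.eventually_sup] at hsmall
  obtain ⟨hbot, htop⟩ := hsmall
  obtain ⟨N₁, hN₁⟩ := Filter.eventually_atTop.mp htop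
  obtain ⟨N₂, hN₂⟩ := Filter.eventually_atBot.mp hbot
  set N : ℕ := (max N₁ (-N₂ - 1)).toNat with hNdef
  have hNa : N₁ ≤ (N : ℤ) := le_trans (le_max_left _ _) (Int.self_le_toNat _)
  have hNb : -(N : ℤ) - 1 ≤ N₂ := by
    have := le_trans (le_max_right N₁ (-N₂ - 1)) (Int.self_le_toNat (max N₁ (-N₂ - 1)))
    omega
  -- the approximate preimage
  set c : E := ∑ n ∈ Finset.Icc (-(N : ℤ)) ((N : ℤ) - 1), u n with hc
  set x : E := ∑ n ∈ Finset.Icc (-(N : ℤ)) (N : ℤ), u n with hx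
  have hxc : x = u (N : ℤ) + c := by
    rw [hx, hc]
    have e2 : Finset.Icc (-(N : ℤ)) (N : ℤ) =
        insert (N : ℤ) (Finset.Icc (-(N : ℤ)) ((N : ℤ) - 1)) := by
      ext n; simp only [Finset.mem_Icc, Finset.mem_insert]; omega
    rw [e2, Finset.sum_insert (by simp only [Finset.mem_Icc]; omega)]
  have hsumeq : ∑ n ∈ Finset.Icc (-(N : ℤ)) (N : ℤ), (u n - a (u (n - 1))) = y := by
    have : ∀ n ∈ Finset.Icc (-(N : ℤ)) (N : ℤ), u n - a (u (n - 1)) =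
        (if n = 0 then y else 0) := fun n _ => key n
    rw [Finset.sum_congr rfl this, Finset.sum_ite_eq' _ (0 : ℤ) (fun _ => y)]
    rw [if_pos (by simp only [Finset.mem_Icc]; omega)]
  have hshift : ∑ n ∈ Finset.Icc (-(N : ℤ)) (N : ℤ), u (n - 1) = u (-(N : ℤ) - 1) + c := by
    have h1 : ∑ n ∈ Finset.Icc (-(N : ℤ)) (N : ℤ), u (n - 1) =
        ∑ m ∈ Finset.Icc (-(N : ℤ) - 1) ((N : ℤ) - 1), u m := by
      refine Finset.sum_nbij' (fun n => n - 1) (fun m => m + 1) ?_ ?_ ?_ ?_ ?_ <;>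
        intros <;> simp_all only [Finset.mem_Icc] <;> omega
    have e1 : Finset.Icc (-(N : ℤ) - 1) ((N : ℤ) - 1) =
        insert (-(N : ℤ) - 1) (Finset.Icc (-(N : ℤ)) ((N : ℤ) - 1)) := by
      ext n; simp only [Finset.mem_Icc, Finset.mem_insert]; omega
    rw [h1, e1, Finset.sum_insert (by simp only [Finset.mem_Icc]; omega)]
  have hmain : x - a x = y + a (u (-(N : ℤ) - 1)) - a (u (N : ℤ)) := by
    have h2 : x - a (u (-(N : ℤ) - 1) + c) = y := by
      rw [← hshift, map_sum, hx, ← Finset.sum_sub_distrib]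
      exact hsumeq
    have h3 : a x = a (u (N : ℤ)) + a c := by rw [hxc, map_add]
    have h4 : a (u (-(N : ℤ) - 1) + c) = a (u (-(N : ℤ) - 1)) + a c := map_add a _ _
    rw [h4] at h2
    rw [h3]
    have := h2
    abel_nf
    abel_nf at this
    linear_combination (norm := abel) this
  refine ⟨x, ?_⟩
  have happ : ((1 : E →L[ℂ] E) - a) x = x - a x := by
    rw [ContinuousLinearMap.sub_apply, ContinuousLinearMap.one_apply]
  rw [happ, hmain, dist_eq_norm]
  have hb1 : ‖a (u (N : ℤ))‖ < (‖a‖ + 1) * δ := by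
    calc ‖a (u (N : ℤ))‖ ≤ ‖a‖ * ‖u (N : ℤ)‖ := a.le_opNorm _
    _ ≤ (‖a‖ + 1) * ‖u (N : ℤ)‖ := by
        apply mul_le_mul_of_nonneg_right (by linarith) (norm_nonneg _)
    _ < (‖a‖ + 1) * δ := by
        apply mul_lt_mul_of_pos_left (hN₁ _ hNa) (by positivity)
  have hb2 : ‖a (u (-(N : ℤ) - 1))‖ < (‖a‖ + 1) * δ := by
    calc ‖a (u (-(N : ℤ) - 1))‖ ≤ ‖a‖ * ‖u (-(N : ℤ) - 1)‖ := a.le_opNorm _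
    _ ≤ (‖a‖ + 1) * ‖u (-(N : ℤ) - 1)‖ := by
        apply mul_le_mul_of_nonneg_right (by linarith) (norm_nonneg _)
    _ < (‖a‖ + 1) * δ := by
        apply mul_lt_mul_of_pos_left (hN₂ _ hNb) (by positivity)
  have : y - (y + a (u (-(N : ℤ) - 1)) - a (u (N : ℤ))) =
      a (u (N : ℤ)) - a (u (-(N : ℤ) - 1)) := by abel
  rw [this]
  calc ‖a (u (N : ℤ)) - a (u (-(N : ℤ) - 1))‖
      ≤ ‖a (u (N : ℤ))‖ + ‖a (u (-(N : ℤ) - 1))‖ := norm_sub_le _ _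
    _ < (‖a‖ + 1) * δ + (‖a‖ + 1) * δ := add_lt_add hb1 hb2
    _ = ε := by rw [hδdef]; field_simp; ring
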